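/- Let H be a finite group and V an irreducible F_p H-module with F = End_H(V), q = |F|, r = dim_F V. Then the H-submodule of V^δ generated by any single element is isomorphic to V^k for some k ≤ r. Consequently, if δ > r, then for any v ∈ V^δ the number of maximal H-submodules of V^δ containing v is at least (q^{δ-r} - 1)/(q - 1). -/

import Mathlib

set_option linter.unusedSectionVars false
set_option maxHeartbeats 1600000

open Subgroup

section AuxSimple

variable {R : Type} [Ring R] {V : Type} [AddCommGroup V] [Module R V] [IsSimpleModule R V]

theorem aux_pi_semisimple (n : ℕ) : IsSemisimpleModule R (Fin n → V) := by
  apply IsSemisimpleModule.of_sSup_simples_eq_top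
  rw [eq_top_iff]
  intro x _
  have hx : x = ∑ i : Fin n, Pi.single i (x i) := (Finset.univ_sum_single x).symm
  rw [hx]
  apply Submodule.sum_mem
  intro i _
  refine Submodule.mem_sSup_of_mem (s := ?_) ?_ ?_
  · exact LinearMap.range (LinearMap.single R (fun _ => V) i)
  · exact IsSimpleModule.congr
      (LinearEquiv.ofInjective (LinearMap.single R (fun _ => V) i)
        (LinearMap.ker_eq_bot.mp (LinearMap.ker_single R _ i))).symm
  · exact ⟨x i, rfl⟩


theorem aux_exists_hom {n : ℕ} (N : Submodule R (Fin n → V)) (h : N ≠ ⊤) :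
    ∃ ψ : (Fin n → V) →ₗ[R] V, ψ ≠ 0 ∧ N ≤ LinearMap.ker ψ := by
  haveI := aux_pi_semisimple (R := R) (V := V) n
  obtain ⟨C, hC⟩ := exists_isCompl N
  have hCne : C ≠ ⊥ := by
    rintro rfl
    exact h (by simpa using hC.sup_eq_top)
  obtain ⟨c, hcC, hc0⟩ := Submodule.exists_mem_ne_zero_of_ne_bot hCne
  obtain ⟨i, hi⟩ : ∃ i, c i ≠ 0 := by
    by_contra hcon
    push_neg at hcon
    exact hc0 (funext hcon)
  refine ⟨(LinearMap.proj i) ∘ₗ C.subtype ∘ₗ (C.linearProjOfIsCompl N hC.symm), ?_, ?_⟩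
  · intro h0
    have h1 : C.linearProjOfIsCompl N hC.symm c = ⟨c, hcC⟩ :=
      Submodule.linearProjOfIsCompl_apply_left hC.symm ⟨c, hcC⟩
    have := congrFun (congrArg (fun (f : (Fin n → V) →ₗ[R] V) => (f : (Fin n → V) → V)) h0) c
    simp only [LinearMap.comp_apply, h1, LinearMap.zero_apply] at this
    exact hi this
  · intro z hz
    have h1 : C.linearProjOfIsCompl N hC.symm z = 0 :=
      Submodule.linearProjOfIsCompl_apply_right hC.symm ⟨z, hz⟩
    simp only [LinearMap.mem_ker, LinearMap.comp_apply, h1]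
    simp


theorem aux_density {k : ℕ} (b : Fin k → V)
    (hb : LinearIndependent (Module.End R V) b) :
    Function.Surjective (LinearMap.toSpanSingleton R (Fin k → V) b) := by
  rw [← LinearMap.range_eq_top]
  by_contra hne
  obtain ⟨ψ, hψ0, hψ⟩ := aux_exists_hom _ hne
  have hψb : ψ b = 0 := by
    have : b ∈ LinearMap.range (LinearMap.toSpanSingleton R (Fin k → V) b) :=
      ⟨1, one_smul _ _⟩
    exact hψ this
  have hc : ∀ j, ψ ∘ₗ LinearMap.single R (fun _ => V) j = 0 := by
    have := Fintype.linearIndependent_iff.mp hb (fun j => ψ ∘ₗ LinearMap.single R (fun _ => V) j) ?_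
    · exact this
    · calc ∑ j, (ψ ∘ₗ LinearMap.single R (fun _ => V) j) • b j
          = ∑ j, ψ (Pi.single j (b j)) := rfl
        _ = ψ (∑ j, Pi.single j (b j)) := (map_sum ψ _ _).symm
        _ = ψ b := by rw [Finset.univ_sum_single]
        _ = 0 := hψb
  apply hψ0
  refine LinearMap.ext fun x => ?_
  have hx : x = ∑ j : Fin k, Pi.single j (x j) := (Finset.univ_sum_single x).symm
  rw [LinearMap.zero_apply, hx, map_sum]
  refine Finset.sum_eq_zero fun j _ => ?_
  have := congrFun (congrArg (fun (f : V →ₗ[R] V) => (f : V → V)) (hc j)) (x j)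
  simpa using this


theorem aux_ann {r : R} {s : Set V} (h : ∀ w ∈ s, r • w = 0) :
    ∀ w ∈ Submodule.span (Module.End R V) s, r • w = 0 := by
  intro w hw
  induction hw using Submodule.span_induction with
  | mem w hws => exact h w hws
  | zero => exact smul_zero r
  | add a b _ _ ha hb => rw [smul_add, ha, hb, add_zero]
  | smul c w _ hw =>
      rw [Module.End.smul_def, ← map_smul, hw, map_zero]


theorem aux_part1 [Finite V] {δ : ℕ} (x : Fin δ → V) :
    ∃ k ≤ Module.finrank (Module.End R V) V,
      Nonempty ((Submodule.span R {x} : Submodule R (Fin δ → V)) ≃ₗ[R] (Fin k → V)) := by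
  letI := Classical.decEq (Module.End R V)
  haveI : Module.Finite (Module.End R V) V := Module.Finite.of_finite
  set F := Module.End R V with hF
  set U : Submodule F V := Submodule.span F (Set.range x) with hU
  refine ⟨Module.finrank F U, Submodule.finrank_le U, ?_⟩
  set k := Module.finrank F U with hk
  let bU : Module.Basis (Fin k) F U := Module.finBasis F U
  let b : Fin k → V := fun j => (bU j : V)
  have hbmem : ∀ j, b j ∈ U := fun j => (bU j).2
  have hbind : LinearIndependent F b :=
    bU.linearIndependent.map' U.subtype (Submodule.ker_subtype U)
  have hspanb : Submodule.span F (Set.range b) = U := by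
    have : Set.range b = Set.range (U.subtype ∘ bU) := rfl
    rw [this, Set.range_comp, Submodule.span_image, bU.span_eq, Submodule.map_subtype_top]
  have hxmem : ∀ i, x i ∈ Submodule.span F (Set.range b) := by
    intro i
    rw [hspanb]
    exact Submodule.subset_span ⟨i, rfl⟩
  set α := LinearMap.toSpanSingleton R (Fin δ → V) x with hα
  set φ := LinearMap.toSpanSingleton R (Fin k → V) b with hφ
  have hker : LinearMap.ker α = LinearMap.ker φ := by
    ext r
    simp only [LinearMap.mem_ker, hα, hφ, LinearMap.toSpanSingleton_apply]
    constructor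
    · intro h
      funext j
      have h' : ∀ w ∈ Set.range x, r • w = 0 := by
        rintro w ⟨i, rfl⟩
        exact congrFun h i
      show r • b j = 0
      exact aux_ann h' (b j) (hbmem j)
    · intro h
      funext i
      have h' : ∀ w ∈ Set.range b, r • w = 0 := by
        rintro w ⟨j, rfl⟩
        exact congrFun h j
      show r • x i = 0
      exact aux_ann h' (x i) (hxmem i)
  have hsurj : Function.Surjective φ := aux_density b hbind
  have e1 : (Submodule.span R {x} : Submodule R (Fin δ → V)) ≃ₗ[R] LinearMap.range α :=
    LinearEquiv.ofEq _ _ (LinearMap.span_singleton_eq_range R _ x)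
  have e2 : (LinearMap.range α : Submodule R (Fin δ → V)) ≃ₗ[R] (R ⧸ LinearMap.ker α) :=
    α.quotKerEquivRange.symm
  have e3 : (R ⧸ LinearMap.ker α) ≃ₗ[R] (R ⧸ LinearMap.ker φ) :=
    Submodule.quotEquivOfEq _ _ hker
  have e4 : (R ⧸ LinearMap.ker φ) ≃ₗ[R] (Fin k → V) :=
    φ.quotKerEquivOfSurjective hsurj
  exact ⟨e1.trans (e2.trans (e3.trans e4))⟩


theorem aux_factor {n : ℕ} {f g : (Fin n → V) →ₗ[R] V} (hf : Function.Surjective f)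
    (h : LinearMap.ker f ≤ LinearMap.ker g) : ∃ c : Module.End R V, g = c ∘ₗ f := by
  let e := f.quotKerEquivOfSurjective hf
  refine ⟨((LinearMap.ker f).liftQ g h) ∘ₗ (e.symm : V →ₗ[R] (Fin n → V) ⧸ LinearMap.ker f), ?_⟩
  refine LinearMap.ext fun z => ?_
  have he : e (Submodule.Quotient.mk z) = f z := by
    simp [e, LinearMap.quotKerEquivOfSurjective, LinearMap.quotKerEquivRange_apply_mk]
  have h2 : e.symm (f z) = Submodule.Quotient.mk z := by rw [← he, e.symm_apply_apply]
  simp only [LinearMap.comp_apply, LinearEquiv.coe_coe, h2, Submodule.liftQ_apply]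


theorem aux_part2 [Finite V] {δ : ℕ}
    (hlt : Module.finrank (Module.End R V) V < δ) (v : Fin δ → V) :
    (Nat.card (Module.End R V) ^ (δ - Module.finrank (Module.End R V) V) - 1) /
      (Nat.card (Module.End R V) - 1) ≤
    Nat.card {W : Submodule R (Fin δ → V) // IsCoatom W ∧ v ∈ W} := by
  classical
  set F := Module.End R V with hF
  set r := Module.finrank F V with hr
  set q := Nat.card F with hq
  set L := (Fin δ → V) →ₗ[R] V with hL
  haveI : Finite F := Finite.of_injective _ (DFunLike.coe_injective (F := F))
  haveI : Finite L := Finite.of_injective _ (DFunLike.coe_injective (F := L))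
  haveI := IsSimpleModule.nontrivial R V
  haveI : Nontrivial F := by
    obtain ⟨w, hw⟩ := exists_ne (0 : V)
    exact ⟨0, 1, fun h0 => hw (by exact (congrFun (congrArg DFunLike.coe h0) w).symm)⟩
  have hq2 : 2 ≤ q := Finite.one_lt_card_iff_nontrivial.mpr ‹Nontrivial F›
  -- cardinality of V
  letI : Fintype V := Fintype.ofFinite V
  letI : Fintype F := Fintype.ofFinite F
  have hcardV : Nat.card V = q ^ r := by
    have h := Module.card_eq_pow_finrank (K := F) (V := V)
    rw [hq, Nat.card_eq_fintype_card, Nat.card_eq_fintype_card]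
    exact h
  -- cardinality of L
  have hcardL : Nat.card L = q ^ δ := by
    have e1 : (Fin δ → Module.End R V) ≃ L :=
      (LinearMap.lsum R (fun _ : Fin δ => V) ℕ).toEquiv
    rw [← Nat.card_congr e1, Nat.card_fun]
    simp [hq, Nat.card_eq_fintype_card]
    exact congrArg (· ^ δ) (Fintype.card_congr (Equiv.refl _))
  -- evaluation map
  let E : L →+ V :=
    { toFun := fun ψ => ψ v, map_zero' := rfl, map_add' := fun _ _ => rfl }
  have hker_ge : q ^ (δ - r) ≤ Nat.card E.ker := by
    have hsplit : Nat.card L = Nat.card (L ⧸ E.ker) * Nat.card E.ker :=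
      AddSubgroup.card_eq_card_quotient_mul_card_addSubgroup E.ker
    have hquot : Nat.card (L ⧸ E.ker) = Nat.card E.range :=
      Nat.card_congr (QuotientAddGroup.quotientKerEquivRange E).toEquiv
    have hrange : Nat.card E.range ≤ q ^ r := by
      rw [← hcardV]
      exact Nat.card_le_card_of_injective _ Subtype.val_injective
    have : q ^ (δ - r) * q ^ r ≤ Nat.card E.ker * q ^ r := by
      rw [pow_sub_mul_pow q hlt.le]
      calc q ^ δ = Nat.card (L ⧸ E.ker) * Nat.card E.ker := by rw [← hcardL, hsplit]
        _ = Nat.card E.range * Nat.card E.ker := by rw [hquot]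
        _ ≤ q ^ r * Nat.card E.ker := Nat.mul_le_mul_right _ hrange
        _ = Nat.card E.ker * q ^ r := Nat.mul_comm _ _
    exact Nat.le_of_mul_le_mul_right this (pow_pos (by omega : 0 < q) r)
  set B := {W : Submodule R (Fin δ → V) // IsCoatom W ∧ v ∈ W} with hB
  haveI : Finite (Submodule R (Fin δ → V)) :=
    Finite.of_injective (fun W => (W : Set (Fin δ → V))) SetLike.coe_injective
  letI : Fintype B := Fintype.ofFinite _
  set A := {ψ : L // ψ v = 0 ∧ ψ ≠ 0} with hA
  letI : Fintype A := Fintype.ofFinite _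
  letI : Fintype E.ker := Fintype.ofFinite _
  have hcard_ne : ∀ (γ : Type) [AddCommGroup γ] [Fintype γ] [DecidableEq γ],
      Fintype.card {x : γ // x ≠ 0} = Fintype.card γ - 1 := by
    intro γ _ _ _
    have h1 : Fintype.card {x : γ // ¬ x = 0} = Fintype.card γ - Fintype.card {x : γ // x = 0} :=
      Fintype.card_subtype_compl _
    rw [Fintype.card_subtype_eq (0 : γ)] at h1
    exact h1
  have hcardA : q ^ (δ - r) - 1 ≤ Fintype.card A := by
    have e2 : A ≃ {x : E.ker // x ≠ 0} :=
      { toFun := fun a => ⟨⟨a.1, a.2.1⟩, fun h => a.2.2 (congrArg Subtype.val h)⟩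
        invFun := fun x => ⟨x.1.1, ⟨x.1.2, fun h => x.2 (Subtype.ext h)⟩⟩
        left_inv := fun a => rfl
        right_inv := fun x => rfl }
    have h3 : Fintype.card A = Fintype.card E.ker - 1 := by
      rw [Fintype.card_congr e2, hcard_ne]
    rw [h3]
    have h4 : Nat.card E.ker = Fintype.card E.ker := Nat.card_eq_fintype_card
    omega
  let f : A → B := fun a =>
    ⟨LinearMap.ker a.1,
      LinearMap.isCoatom_ker_of_surjective (LinearMap.surjective_of_ne_zero a.2.2),
      LinearMap.mem_ker.mpr a.2.1⟩
  have hfiber : ∀ b : B, Fintype.card {a : A // f a = b} ≤ q - 1 := by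
    intro b
    rcases isEmpty_or_nonempty {a : A // f a = b} with h | h
    · rw [Fintype.card_eq_zero]
      omega
    · obtain ⟨a₀⟩ := h
      have hs0 : Function.Surjective a₀.1.1 := LinearMap.surjective_of_ne_zero a₀.1.2.2
      have key : ∀ a : {a : A // f a = b}, ∃ c : F, c ≠ 0 ∧ (a.1.1 : L) = c ∘ₗ (a₀.1.1 : L) := by
        intro a
        have h1 : LinearMap.ker (a.1.1 : L) = b.1 := congrArg Subtype.val a.2
        have h2 : LinearMap.ker (a₀.1.1 : L) = b.1 := congrArg Subtype.val a₀.2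
        have hker : LinearMap.ker (a₀.1.1 : L) ≤ LinearMap.ker (a.1.1 : L) := by rw [h1, h2]
        obtain ⟨c, hc⟩ := aux_factor hs0 hker
        refine ⟨c, ?_, hc⟩
        rintro rfl
        apply a.1.2.2
        rw [hc]
        refine LinearMap.ext fun z => ?_
        simp
      choose g hg0 hg using key
      have hginj : Function.Injective (fun a => (⟨g a, hg0 a⟩ : {c : F // c ≠ 0})) := by
        intro a a' hgg
        have : g a = g a' := congrArg Subtype.val hgg
        apply Subtype.ext; apply Subtype.ext
        rw [hg a, hg a', this]
      calc Fintype.card {a : A // f a = b} ≤ Fintype.card {c : F // c ≠ 0} :=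
            Fintype.card_le_of_injective _ hginj
        _ = q - 1 := by rw [hcard_ne, hq, Nat.card_eq_fintype_card]
  have htot : Fintype.card A ≤ Fintype.card B * (q - 1) := by
    calc Fintype.card A
        = ∑ b : B, (Finset.univ.filter fun a : A => f a = b).card := by
          rw [← Finset.card_univ,
            Finset.card_eq_sum_card_fiberwise (f := f) (fun x _ => Finset.mem_univ _)]
      _ ≤ ∑ _b : B, (q - 1) := Finset.sum_le_sum (fun b _ => by
            rw [← Fintype.card_subtype]
            exact hfiber b)
      _ = Fintype.card B * (q - 1) := by
            rw [Finset.sum_const, Finset.card_univ, smul_eq_mul]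
  have hfinal : q ^ (δ - r) - 1 ≤ Fintype.card B * (q - 1) := le_trans hcardA htot
  rw [Nat.card_eq_fintype_card]
  calc (q ^ (δ - r) - 1) / (q - 1)
      ≤ (Fintype.card B * (q - 1)) / (q - 1) := Nat.div_le_div_right hfinal
    _ = Fintype.card B := Nat.mul_div_cancel _ (by omega)


end AuxSimple

/-- Let `V` be an irreducible `𝔽ₚH`-module (`H` a finite group), `F = End_H(V)`,
`q = |F|`, `r = dim_F V`.  Then the `H`-submodule of `V^δ` generated by any single
element is isomorphic to `V^k` for some `k ≤ r`; consequently, if `δ > r`, then for any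
`v ∈ V^δ` there are at least `(q^{δ-r} - 1)/(q - 1)` maximal `H`-submodules of `V^δ`
containing `v`. -/
theorem stmt16 (p : ℕ) [Fact p.Prime] (H : Type) [Group H] [Finite H]
    (V : Type) [AddCommGroup V] [Finite V]
    [Module (MonoidAlgebra (ZMod p) H) V]
    [IsSimpleModule (MonoidAlgebra (ZMod p) H) V]
    (δ : ℕ) :
    (∀ x : Fin δ → V,
      ∃ k ≤ Module.finrank (Module.End (MonoidAlgebra (ZMod p) H) V) V,
        Nonempty ((Submodule.span (MonoidAlgebra (ZMod p) H) {x} :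
            Submodule (MonoidAlgebra (ZMod p) H) (Fin δ → V)) ≃ₗ[MonoidAlgebra (ZMod p) H]
          (Fin k → V))) ∧
    (Module.finrank (Module.End (MonoidAlgebra (ZMod p) H) V) V < δ →
      ∀ v : Fin δ → V,
        (Nat.card (Module.End (MonoidAlgebra (ZMod p) H) V) ^
            (δ - Module.finrank (Module.End (MonoidAlgebra (ZMod p) H) V) V) - 1) /
          (Nat.card (Module.End (MonoidAlgebra (ZMod p) H) V) - 1) ≤
        Nat.card {W : Submodule (MonoidAlgebra (ZMod p) H) (Fin δ → V) //
          IsCoatom W ∧ v ∈ W}) := by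
  exact ⟨fun x => aux_part1 x, fun hlt v => aux_part2 hlt v⟩
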